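/- Let d ≥ 3, f(r) = sinh^{d-1}(r), and u(r) = r/f(r) for r > 0. Then the radial hyperbolic Laplacian applied to √u satisfies -(√u)''(r) - (d-1)coth(r)(√u)'(r) = W(r)√u(r) for all r > 0, where W(r) = (d-1)²/4 + 1/(4r²) + (d-1)(d-3)/(4 sinh²(r)). -/

import Mathlib

theorem stmt19 (d : ℕ) (hd : 3 ≤ d) :
    ∀ r : ℝ, 0 < r →
      -(deriv (deriv fun s : ℝ => Real.sqrt (s / Real.sinh s ^ (d - 1))) r) -
        ((d : ℝ) - 1) * (Real.cosh r / Real.sinh r) *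
          deriv (fun s : ℝ => Real.sqrt (s / Real.sinh s ^ (d - 1))) r =
      (((d : ℝ) - 1) ^ 2 / 4 + 1 / (4 * r ^ 2) +
          ((d : ℝ) - 1) * ((d : ℝ) - 3) / (4 * Real.sinh r ^ 2)) *
        Real.sqrt (r / Real.sinh r ^ (d - 1)) := by
  intro r hr
  set n : ℕ := d - 1 with hn
  have hncast : (n : ℝ) = (d : ℝ) - 1 := by
    have h1 : (1:ℕ) ≤ d := by omega
    push_cast [hn, Nat.cast_sub h1]
    ring
  set a : ℝ := -((n:ℝ)/2) with ha
  set φ : ℝ → ℝ := fun t => Real.sqrt t * Real.sinh t ^ a with hφ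
  have heq : ∀ s ∈ Set.Ioi (0:ℝ), Real.sqrt (s / Real.sinh s ^ n) = φ s := by
    intro s hs
    have hs : (0:ℝ) < s := hs
    have hS : 0 < Real.sinh s := Real.sinh_pos_iff.2 hs
    rw [hφ]
    rw [Real.sqrt_div hs.le, Real.sqrt_eq_rpow (Real.sinh s ^ n),
      ← Real.rpow_natCast (Real.sinh s) n, ← Real.rpow_mul hS.le,
      div_eq_mul_inv, ← Real.rpow_neg hS.le]
    ring_nf
    rw [ha]; ring_nf
  set ψ : ℝ → ℝ := fun t => 1 / (2 * Real.sqrt t) * Real.sinh t ^ a +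
      Real.sqrt t * (Real.cosh t * a * Real.sinh t ^ (a - 1)) with hψ
  have hD1 : ∀ s ∈ Set.Ioi (0:ℝ), HasDerivAt φ (ψ s) s := by
    intro s hs
    have hs : (0:ℝ) < s := hs
    have hS : 0 < Real.sinh s := Real.sinh_pos_iff.2 hs
    exact (Real.hasDerivAt_sqrt hs.ne').mul
      ((Real.hasDerivAt_sinh s).rpow_const (Or.inl hS.ne'))
  have hF : ∀ s ∈ Set.Ioi (0:ℝ),
      deriv (fun t : ℝ => Real.sqrt (t / Real.sinh t ^ n)) s = ψ s := by
    intro s hs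
    have hev : (fun t : ℝ => Real.sqrt (t / Real.sinh t ^ n)) =ᶠ[nhds s] φ :=
      Filter.eventuallyEq_of_mem (isOpen_Ioi.mem_nhds hs) heq
    rw [hev.deriv_eq, (hD1 s hs).deriv]
  have hS : 0 < Real.sinh r := Real.sinh_pos_iff.2 hr
  have hq : 0 < Real.sqrt r := Real.sqrt_pos.2 hr
  have hA : HasDerivAt (fun t => 1 / (2 * Real.sqrt t))
      (-(2 * (1 / (2 * Real.sqrt r))) / (2 * Real.sqrt r) ^ 2) r := by
    have h1 : HasDerivAt (fun t => 2 * Real.sqrt t) (2 * (1 / (2 * Real.sqrt r))) r :=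
      (Real.hasDerivAt_sqrt hr.ne').const_mul 2
    have h2 := h1.inv (by positivity)
    have h3 : (fun t : ℝ => 2 * Real.sqrt t)⁻¹ = fun t => 1 / (2 * Real.sqrt t) := by
      funext t; simp [one_div]
    rw [h3] at h2
    exact h2
  have hB : HasDerivAt (fun t => Real.sinh t ^ a)
      (Real.cosh r * a * Real.sinh r ^ (a - 1)) r :=
    (Real.hasDerivAt_sinh r).rpow_const (Or.inl hS.ne')
  have hC : HasDerivAt (fun t => Real.cosh t * a * Real.sinh t ^ (a - 1))
      ((Real.sinh r * a) * Real.sinh r ^ (a-1) +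
        (Real.cosh r * a) * (Real.cosh r * (a-1) * Real.sinh r ^ (a - 1 - 1))) r :=
    ((Real.hasDerivAt_cosh r).mul_const a).mul
      ((Real.hasDerivAt_sinh r).rpow_const (Or.inl hS.ne'))
  have hD2 : HasDerivAt ψ
      ((-(2 * (1 / (2 * Real.sqrt r))) / (2 * Real.sqrt r) ^ 2 * Real.sinh r ^ a +
        1 / (2 * Real.sqrt r) * (Real.cosh r * a * Real.sinh r ^ (a - 1))) +
       (1 / (2 * Real.sqrt r) * (Real.cosh r * a * Real.sinh r ^ (a - 1)) +
        Real.sqrt r * ((Real.sinh r * a) * Real.sinh r ^ (a-1) +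
          (Real.cosh r * a) * (Real.cosh r * (a-1) * Real.sinh r ^ (a - 1 - 1))))) r :=
    (hA.mul hB).add ((Real.hasDerivAt_sqrt hr.ne').mul hC)
  have hev2 : deriv (fun t : ℝ => Real.sqrt (t / Real.sinh t ^ n)) =ᶠ[nhds r] ψ :=
    Filter.eventuallyEq_of_mem (isOpen_Ioi.mem_nhds hr) hF
  have hdd : deriv (deriv fun s : ℝ => Real.sqrt (s / Real.sinh s ^ n)) r = deriv ψ r :=
    hev2.deriv_eq
  rw [hdd, hD2.deriv, hF r hr, heq r hr]
  -- algebra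
  have hq2 : Real.sqrt r ^ 2 = r := Real.sq_sqrt hr.le
  have hra1 : Real.sinh r ^ (a - 1) = Real.sinh r ^ a / Real.sinh r := by
    rw [Real.rpow_sub hS, Real.rpow_one]
  have hra2 : Real.sinh r ^ (a - 1 - 1) = Real.sinh r ^ a / Real.sinh r / Real.sinh r := by
    rw [Real.rpow_sub hS (a-1) 1, hra1, Real.rpow_one]
  rw [hφ, hψ]
  simp only [hra1, hra2]
  have hcosh : Real.cosh r ^ 2 = Real.sinh r ^ 2 + 1 := Real.cosh_sq r
  set q := Real.sqrt r with hqdef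
  set S := Real.sinh r
  set C := Real.cosh r
  set P := S ^ a with hP
  have haa : a = -(((d:ℝ) - 1)/2) := by rw [ha, hncast]
  rw [haa, ← hq2]
  have hq' := hq.ne'
  have hS' := hS.ne'
  field_simp
  linear_combination (4*((d:ℝ)^2 - 4*(d:ℝ) + 3)) * P * q^4 * hcosh
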